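/- Let n ≥ 1, let T be an n-dimensional simplex in ℝ^n, and let Λ be a full-rank lattice in ℝ^n such that T + Λ = ℝ^n. If the star number α(T,Λ) (the number of u ∈ Λ \ {0} with T ∩ (T+u) ≠ ∅) satisfies α(T,Λ) ≥ 2^{3n+1}, then the covering density satisfies vol(T)/det(Λ) ≥ 2. -/

import Mathlib

open Pointwise MeasureTheory Set
open scoped ENNReal

variable {n : ℕ}

local notation "E" n => EuclideanSpace ℝ (Fin n)

-- simplex in coordinates
def stdSimplex' (n : ℕ) (r : ℝ) : Set (EuclideanSpace ℝ (Fin n)) :=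
  {x | (∀ i, 0 ≤ x i) ∧ ∑ i, x i ≤ r}

lemma measurableSet_stdSimplex' (r : ℝ) : MeasurableSet (stdSimplex' n r) := by
  have h1 : MeasurableSet {x : EuclideanSpace ℝ (Fin n) | ∀ i, 0 ≤ x i} := by
    rw [show {x : EuclideanSpace ℝ (Fin n) | ∀ i, 0 ≤ x i}
        = ⋂ i, {x : EuclideanSpace ℝ (Fin n) | 0 ≤ x i} by ext x; simp]
    exact MeasurableSet.iInter fun i =>
      measurableSet_le measurable_const (((measurable_pi_apply (X := fun _ : Fin n => ℝ) i).comp (WithLp.measurable_ofLp 2 _)))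
  have h2 : MeasurableSet {x : EuclideanSpace ℝ (Fin n) | ∑ i, x i ≤ r} := by
    refine measurableSet_le ?_ measurable_const
    exact Finset.measurable_sum _ fun i _ => ((measurable_pi_apply (X := fun _ : Fin n => ℝ) i).comp (WithLp.measurable_ofLp 2 _))
  exact h1.inter h2

lemma convex_stdSimplex' (r : ℝ) : Convex ℝ (stdSimplex' n r) := by
  intro x hx y hy a b ha hb hab
  have hcoord : ∀ i, (a • x + b • y) i = a * x i + b * y i := fun i => by
    simp [PiLp.add_apply, PiLp.smul_apply]
  constructor
  · intro i
    rw [hcoord i]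
    have := mul_nonneg ha (hx.1 i)
    have := mul_nonneg hb (hy.1 i)
    linarith
  · calc ∑ i, (a • x + b • y) i = a * ∑ i, x i + b * ∑ i, y i := by
          simp only [hcoord]; rw [Finset.sum_add_distrib, Finset.mul_sum, Finset.mul_sum]
    _ ≤ a * r + b * r := by
          have := hx.2; have := hy.2
          have h1 : a * ∑ i, x i ≤ a * r := mul_le_mul_of_nonneg_left hx.2 ha
          have h2 : b * ∑ i, y i ≤ b * r := mul_le_mul_of_nonneg_left hy.2 hb
          linarith
    _ = r := by rw [← add_mul, hab, one_mul]

/-- the linear map sending `eᵢ` to `p i.succ - p 0`. -/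
noncomputable def simpLin (p : Fin (n + 1) → EuclideanSpace ℝ (Fin n)) :
    EuclideanSpace ℝ (Fin n) →ₗ[ℝ] EuclideanSpace ℝ (Fin n) where
  toFun x := ∑ i, x i • (p i.succ - p 0)
  map_add' x y := by
    simp only [PiLp.add_apply, add_smul]
    exact Finset.sum_add_distrib
  map_smul' c x := by
    simp only [PiLp.smul_apply, smul_eq_mul, RingHom.id_apply, Finset.smul_sum, mul_smul]

lemma simpLin_single (p : Fin (n + 1) → EuclideanSpace ℝ (Fin n)) (i : Fin n) :
    simpLin p (EuclideanSpace.single i 1) = p i.succ - p 0 := by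
  simp only [simpLin, LinearMap.coe_mk, AddHom.coe_mk]
  rw [Finset.sum_eq_single i]
  · simp [EuclideanSpace.single_apply]
  · intro j _ hj
    simp [EuclideanSpace.single_apply, hj]
  · simp

lemma simplex_eq_image (p : Fin (n + 1) → EuclideanSpace ℝ (Fin n)) :
    convexHull ℝ (Set.range p) = (fun x => simpLin p x + p 0) '' stdSimplex' n 1 := by
  apply le_antisymm
  · -- convex hull is contained in the image
    have himg : (fun x => simpLin p x + p 0) '' stdSimplex' n 1
        = p 0 +ᵥ (simpLin p '' stdSimplex' n 1) := by
      have hcomp : (fun x => simpLin p x + p 0)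
          = (fun y => p 0 +ᵥ y) ∘ (simpLin p) := by
        funext z; simp [vadd_eq_add, add_comm]
      rw [hcomp, Set.image_comp, Set.image_vadd]
    rw [himg]
    apply convexHull_min
    · rintro _ ⟨j, rfl⟩
      refine Fin.cases ?_ ?_ j
      · exact ⟨simpLin p 0, ⟨0, ⟨fun i => le_refl 0, by simp⟩, rfl⟩, by simp [vadd_eq_add]⟩
      · intro i
        refine ⟨simpLin p (EuclideanSpace.single i 1),
          ⟨EuclideanSpace.single i 1, ⟨fun j => ?_, ?_⟩, rfl⟩, ?_⟩
        · rw [EuclideanSpace.single_apply]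
          positivity
        · simp [EuclideanSpace.single_apply]
        · rw [simpLin_single]
          simp [vadd_eq_add]
    · exact ((convex_stdSimplex' 1).linear_image (simpLin p)).vadd _
  · rintro y ⟨x, ⟨hx0, hx1⟩, rfl⟩
    -- convex combination
    have hw : ∀ j ∈ Finset.univ, 0 ≤ Fin.cons (α := fun _ : Fin (n+1) => ℝ) (1 - ∑ i, x i) (fun i => x i) j := by
      intro j _
      refine Fin.cases ?_ ?_ j
      · simpa using hx1
      · intro i; simpa using hx0 i
    have hws : ∑ j, Fin.cons (α := fun _ : Fin (n+1) => ℝ) (1 - ∑ i, x i) (fun i => x i) j = 1 := by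
      rw [Fin.sum_cons]; ring
    have := Finset.centerMass_mem_convexHull (Finset.univ)
      hw (by rw [hws]; norm_num) (fun j _ => Set.mem_range_self (f := p) j)
    rw [Finset.centerMass_eq_of_sum_1 _ _ hws] at this
    convert this using 1
    rw [Fin.sum_univ_succ]
    simp only [Fin.cons_zero, Fin.cons_succ, simpLin, LinearMap.coe_mk, AddHom.coe_mk,
      smul_sub, sub_smul, one_smul]
    rw [Finset.sum_sub_distrib, ← Finset.sum_smul]
    abel

/-- sign-flipping isometry of Euclidean space -/
noncomputable def flipIso (n : ℕ) (s : Fin n → Bool) :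
    EuclideanSpace ℝ (Fin n) ≃ₗᵢ[ℝ] EuclideanSpace ℝ (Fin n) :=
  LinearIsometryEquiv.piLpCongrRight 2
    (fun i => if s i then LinearIsometryEquiv.refl ℝ ℝ else LinearIsometryEquiv.neg ℝ)

lemma flipIso_apply (s : Fin n → Bool) (x : EuclideanSpace ℝ (Fin n)) (i : Fin n) :
    flipIso n s x i = if s i then x i else -(x i) := by
  rw [flipIso, LinearIsometryEquiv.piLpCongrRight_apply]
  by_cases h : s i <;> simp [h]

lemma volume_l1ball_le :
    volume {y : EuclideanSpace ℝ (Fin n) | ∑ i, |y i| ≤ 3}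
      ≤ 6 ^ n * volume (stdSimplex' n 1) := by
  -- covering by 2^n sign-flipped copies of the 3-dilated simplex
  have hcover : {y : EuclideanSpace ℝ (Fin n) | ∑ i, |y i| ≤ 3}
      ⊆ ⋃ s : Fin n → Bool, flipIso n s '' (stdSimplex' n 3) := by
    intro y hy
    set s : Fin n → Bool := fun i => decide (0 ≤ y i) with hs
    refine Set.mem_iUnion.2 ⟨s, flipIso n s y, ⟨?_, ?_⟩, ?_⟩
    · intro i
      rw [flipIso_apply]
      by_cases h : 0 ≤ y i <;> simp [hs, h] <;> linarith
    · have : ∀ i, flipIso n s y i = |y i| := by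
        intro i
        rw [flipIso_apply]
        by_cases h : 0 ≤ y i
        · simp [hs, h, abs_of_nonneg h]
        · simp [hs, h, abs_of_neg (lt_of_not_ge h)]
      simpa [this] using hy
    · ext i
      rw [flipIso_apply]
      by_cases h : s i <;> simp [h, flipIso_apply]
  have hdil : stdSimplex' n 3 = (3 : ℝ) • stdSimplex' n 1 := by
    ext x
    rw [Set.mem_smul_set_iff_inv_smul_mem₀ (by norm_num : (3:ℝ) ≠ 0)]
    have hc : ∀ i, ((3:ℝ)⁻¹ • x) i = 3⁻¹ * x i := fun _ => rfl
    constructor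
    · rintro ⟨h0, h1⟩
      refine ⟨fun i => ?_, ?_⟩
      · rw [hc]; have := h0 i; linarith
      · simp only [hc, ← Finset.mul_sum]; linarith
    · rintro ⟨h0, h1⟩
      refine ⟨fun i => ?_, ?_⟩
      · have := h0 i; rw [hc] at this; linarith
      · have := h1; simp only [hc, ← Finset.mul_sum] at this; linarith
  calc volume {y : EuclideanSpace ℝ (Fin n) | ∑ i, |y i| ≤ 3}
      ≤ ∑ s : Fin n → Bool, volume (flipIso n s '' (stdSimplex' n 3)) :=
        le_trans (measure_mono hcover) (measure_iUnion_fintype_le _ _)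
    _ = ∑ s : Fin n → Bool, volume (stdSimplex' n 3) := by
        refine Finset.sum_congr rfl fun s _ => ?_
        rw [LinearIsometryEquiv.image_eq_preimage_symm]
        exact ((flipIso n s).symm.measurePreserving).measure_preimage
          (measurableSet_stdSimplex' 3).nullMeasurableSet
    _ = 6 ^ n * volume (stdSimplex' n 1) := by
        rw [Finset.sum_const, Finset.card_univ, Fintype.card_fun, Fintype.card_bool,
          Fintype.card_fin, hdil, Measure.addHaar_smul_of_nonneg volume (by norm_num : (0:ℝ) ≤ 3),
          finrank_euclideanSpace_fin]
        rw [nsmul_eq_mul, ← mul_assoc]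
        congr 1
        have h3 : ENNReal.ofReal ((3:ℝ) ^ n) = 3 ^ n := by
          rw [ENNReal.ofReal_pow (by norm_num), ENNReal.ofReal_ofNat]
        rw [h3, show ((6:ℝ≥0∞)) = 2 * 3 by norm_num, mul_pow]
        norm_num

lemma volume_image_affine (p : Fin (n + 1) → EuclideanSpace ℝ (Fin n))
    (A : Set (EuclideanSpace ℝ (Fin n))) :
    volume ((fun x => simpLin p x + p 0) '' A)
      = ENNReal.ofReal |LinearMap.det (simpLin p)| * volume A := by
  have hcomp : (fun x => simpLin p x + p 0)
      = (fun y => p 0 +ᵥ y) ∘ (simpLin p) := by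
    funext z; simp [vadd_eq_add, add_comm]
  rw [hcomp, Set.image_comp, Set.image_vadd, measure_vadd,
    Measure.addHaar_image_linearMap]

lemma volume_sub_add_le (p : Fin (n + 1) → EuclideanSpace ℝ (Fin n))
    (T : Set (EuclideanSpace ℝ (Fin n))) (hT : T = convexHull ℝ (Set.range p)) :
    volume (T - T + T) ≤ 6 ^ n * volume T := by
  have hrep : T = (fun x => simpLin p x + p 0) '' stdSimplex' n 1 := by
    rw [hT, simplex_eq_image]
  have hsub : T - T + T
      ⊆ (fun x => simpLin p x + p 0) '' {y : EuclideanSpace ℝ (Fin n) | ∑ i, |y i| ≤ 3} := by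
    rintro z hz
    rw [Set.mem_add] at hz
    obtain ⟨u, hu, w, hw, rfl⟩ := hz
    rw [Set.mem_sub] at hu
    obtain ⟨a, ha, c, hc, rfl⟩ := hu
    rw [hrep] at ha hc hw
    obtain ⟨xa, ⟨ha0, ha1⟩, rfl⟩ := ha
    obtain ⟨xc, ⟨hc0, hc1⟩, rfl⟩ := hc
    obtain ⟨xw, ⟨hw0, hw1⟩, rfl⟩ := hw
    refine ⟨xa - xc + xw, ?_, ?_⟩
    · have hcoord : ∀ i, (xa - xc + xw) i = xa i - xc i + xw i := fun _ => rfl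
      calc ∑ i, |(xa - xc + xw) i| ≤ ∑ i, (xa i + xc i + xw i) := by
            refine Finset.sum_le_sum fun i _ => ?_
            rw [hcoord i]
            have := ha0 i; have := hc0 i; have := hw0 i
            rw [abs_le]
            constructor <;> linarith
        _ ≤ 3 := by
            rw [Finset.sum_add_distrib, Finset.sum_add_distrib]
            linarith
    · simp only [map_add, map_sub]
      abel
  calc volume (T - T + T)
      ≤ volume ((fun x => simpLin p x + p 0) ''
          {y : EuclideanSpace ℝ (Fin n) | ∑ i, |y i| ≤ 3}) := measure_mono hsub
    _ = ENNReal.ofReal |LinearMap.det (simpLin p)|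
          * volume {y : EuclideanSpace ℝ (Fin n) | ∑ i, |y i| ≤ 3} := volume_image_affine p _
    _ ≤ ENNReal.ofReal |LinearMap.det (simpLin p)| * (6 ^ n * volume (stdSimplex' n 1)) :=
          mul_le_mul_right volume_l1ball_le _
    _ = 6 ^ n * volume T := by
          rw [hrep, volume_image_affine p]
          ring

lemma volume_fd (b : Module.Basis (Fin n) ℝ (EuclideanSpace ℝ (Fin n))) :
    volume (ZSpan.fundamentalDomain b)
      = ENNReal.ofReal |(Matrix.of fun i j => b i j).det| := by
  set f : EuclideanSpace ℝ (Fin n) ≃ₗ[ℝ] (Fin n → ℝ) :=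
    WithLp.linearEquiv 2 ℝ (Fin n → ℝ) with hf
  have h1 : volume (ZSpan.fundamentalDomain (b.map f))
      = volume (ZSpan.fundamentalDomain b) := by
    rw [← ZSpan.map_fundamentalDomain]
    have he : (f '' ZSpan.fundamentalDomain b)
        = (MeasurableEquiv.toLp 2 (Fin n → ℝ)).symm.symm ⁻¹' (ZSpan.fundamentalDomain b) := by
      rw [← MeasurableEquiv.image_eq_preimage_symm]
      rfl
    rw [he]
    exact ((EuclideanSpace.volume_preserving_symm_measurableEquiv_toLp (Fin n)).symm).measure_preimage_emb
      (MeasurableEquiv.measurableEmbedding _) _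
  rw [← h1, ZSpan.volume_fundamentalDomain]
  have : Matrix.of ⇑(b.map f) = Matrix.of fun i j => b i j := by
    ext i j
    simp only [Matrix.of_apply, Module.Basis.map_apply, hf]
    rfl
  rw [this]

lemma packing_bound (b : Module.Basis (Fin n) ℝ (EuclideanSpace ℝ (Fin n)))
    (T : Set (EuclideanSpace ℝ (Fin n))) (hTm : MeasurableSet T)
    (hcov : T + (↑(Submodule.span ℤ (Set.range b)) : Set (EuclideanSpace ℝ (Fin n)))
      = Set.univ)
    (S : Finset (EuclideanSpace ℝ (Fin n)))
    (hS : ∀ u ∈ S, u ∈ Submodule.span ℤ (Set.range b) ∧ u ∈ T - T) :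
    (S.card : ℝ≥0∞) * volume (ZSpan.fundamentalDomain b) ≤ volume (T - T + T) := by
  classical
  set Λ := Submodule.span ℤ (Set.range b) with hΛ
  -- enumerate the lattice
  have hΛc : (↑Λ : Set (EuclideanSpace ℝ (Fin n))).Countable := by
    have hsub : (↑Λ : Set (EuclideanSpace ℝ (Fin n)))
        ⊆ Set.range (fun m : Fin n → ℤ => ∑ i, m i • b i) := by
      intro x hx
      obtain ⟨c, hc⟩ := (Submodule.mem_span_range_iff_exists_fun ℤ).1 hx
      exact ⟨c, hc⟩
    exact (Set.countable_range _).mono hsub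
  obtain ⟨v, hv⟩ := hΛc.exists_eq_range ⟨0, Submodule.zero_mem Λ⟩
  have hvmem : ∀ k, v k ∈ Λ := by
    intro k
    have : v k ∈ (↑Λ : Set (EuclideanSpace ℝ (Fin n))) := by rw [hv]; exact Set.mem_range_self k
    exact this
  have hexist : ∀ x : EuclideanSpace ℝ (Fin n), ∃ k, x - v k ∈ T := by
    intro x
    have hx : x ∈ T + (↑Λ : Set (EuclideanSpace ℝ (Fin n))) := by
      rw [hcov]; trivial
    rw [Set.mem_add] at hx
    obtain ⟨t, ht, l, hl, rfl⟩ := hx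
    rw [hv] at hl
    obtain ⟨k, rfl⟩ := hl
    exact ⟨k, by simpa using ht⟩
  set D := ZSpan.fundamentalDomain b with hD
  have hDmeas : MeasurableSet D := ZSpan.fundamentalDomain_measurableSet b
  have huniq : ∀ y z : EuclideanSpace ℝ (Fin n), y ∈ D → z ∈ D → y - z ∈ Λ → y = z := by
    intro y z hy hz hyz
    have h1 := ZSpan.exist_unique_vadd_mem_fundamentalDomain b z
    have e1 : (⟨y - z, hyz⟩ : Λ) +ᵥ z ∈ ZSpan.fundamentalDomain b := by
      have : (⟨y - z, hyz⟩ : Λ) +ᵥ z = y := by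
        show ((⟨y - z, hyz⟩ : Λ) : EuclideanSpace ℝ (Fin n)) + z = y
        simp
      rwa [this]
    have e2 : (0 : Λ) +ᵥ z ∈ ZSpan.fundamentalDomain b := by
      rw [zero_vadd]; exact hz
    have := h1.unique e1 e2
    have h0 : y - z = 0 := by
      simpa using congrArg (Subtype.val) this
    exact sub_eq_zero.mp h0
  -- the layers
  set Q : ℕ → Set (EuclideanSpace ℝ (Fin n)) := fun k => {x | x - v k ∈ T} with hQdef
  have hQmeas : ∀ k, MeasurableSet (Q k) := fun k =>
    hTm.preimage (measurable_id.sub measurable_const)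
  set G : ℕ → Set (EuclideanSpace ℝ (Fin n)) :=
    fun k => (D ∩ Q k) \ ⋃ j, ⋃ (_ : j < k), Q j with hGdef
  have hGmeas : ∀ k, MeasurableSet (G k) :=
    fun k => ((hDmeas.inter (hQmeas k)).diff
      (MeasurableSet.iUnion fun j => MeasurableSet.iUnion fun _ => hQmeas j))
  have hGD : ∀ k, G k ⊆ D := fun k x hx => hx.1.1
  have hGQ : ∀ k, G k ⊆ Q k := fun k x hx => hx.1.2
  have hGdisj : ∀ k j, k ≠ j → ∀ x, x ∈ G k → x ∈ G j → False := by
    have key : ∀ k j, k < j → ∀ x, x ∈ G k → x ∈ G j → False := by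
      intro k j hkj x hk hj
      exact hj.2 (Set.mem_biUnion hkj hk.1.2)
    intro k j hkj x hk hj
    rcases lt_or_gt_of_ne hkj with h | h
    · exact key k j h x hk hj
    · exact key j k h x hj hk
  have hGunion : ⋃ k, G k = D := by
    apply le_antisymm
    · exact Set.iUnion_subset hGD
    · intro x hx
      have hex : ∃ k, x ∈ Q k := by
        obtain ⟨k, hk⟩ := hexist x
        exact ⟨k, hk⟩
      set k := Nat.find hex with hk
      refine Set.mem_iUnion.2 ⟨k, ⟨⟨hx, Nat.find_spec hex⟩, ?_⟩⟩
      rintro hmem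
      obtain ⟨j, hj, hxj⟩ := Set.mem_iUnion₂.1 hmem
      exact Nat.find_min hex hj hxj
  -- the translated pieces
  set P : EuclideanSpace ℝ (Fin n) → Set (EuclideanSpace ℝ (Fin n)) :=
    fun u => ⋃ k, ((u - v k) +ᵥ G k) with hPdef
  have hPmeas : ∀ u, MeasurableSet (P u) :=
    fun u => MeasurableSet.iUnion fun k => (hGmeas k).const_vadd _
  -- membership description
  have hPmem : ∀ u x, x ∈ P u ↔ ∃ k, x - u + v k ∈ G k := by
    intro u x
    rw [Set.mem_iUnion]
    apply exists_congr
    intro k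
    rw [Set.mem_vadd_set]
    constructor
    · rintro ⟨y, hy, rfl⟩
      have h2 : ((u - v k) +ᵥ y) - u + v k = y := by
        rw [vadd_eq_add]; abel
      rwa [h2]
    · intro h
      exact ⟨x - u + v k, h, by rw [vadd_eq_add]; abel⟩
  -- disjointness of the translated pieces within one u, and across u's
  have hPdisj : ∀ u u', u ∈ Λ → u' ∈ Λ → u ≠ u' → Disjoint (P u) (P u') := by
    intro u u' hu hu' huu
    rw [Set.disjoint_left]
    intro x hx hx'
    obtain ⟨k, hk⟩ := (hPmem u x).1 hx
    obtain ⟨j, hj⟩ := (hPmem u' x).1 hx'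
    have hsub : (x - u + v k) - (x - u' + v j) ∈ Λ := by
      have : (x - u + v k) - (x - u' + v j) = (u' - u) + (v k - v j) := by abel
      rw [this]
      exact Submodule.add_mem _ (Submodule.sub_mem _ hu' hu)
        (Submodule.sub_mem _ (hvmem k) (hvmem j))
    have heq := huniq _ _ (hGD k hk) (hGD j hj) hsub
    by_cases hkj : k = j
    · subst hkj
      exact huu (sub_right_inj.mp (add_right_cancel heq))
    · exact hGdisj k j hkj _ (heq ▸ hk) hj
  -- volume of each P u equals volume of D
  have hvolG : volume D = ∑' k, volume (G k) := by
    rw [← hGunion]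
    refine measure_iUnion ?_ hGmeas
    intro k j hkj
    rw [Function.onFun, Set.disjoint_left]
    intro x hxk hxj
    exact absurd hxj (fun h => hGdisj k j hkj x hxk h)
  have hvolP : ∀ u, volume (P u) = volume D := by
    intro u
    have hdisj : Pairwise (Function.onFun Disjoint (fun k => (u - v k) +ᵥ G k)) := by
      intro k j hkj
      rw [Function.onFun, Set.disjoint_left]
      intro x hxk hxj
      obtain ⟨y, hy, rfl⟩ := Set.mem_vadd_set.1 hxk
      obtain ⟨y', hy', hyx⟩ := Set.mem_vadd_set.1 hxj
      have hyy : y - y' ∈ Λ := by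
        have h4 : u - v j + y' = u - v k + y := by
          rw [← vadd_eq_add, ← vadd_eq_add]; exact hyx
        have h6 : y - y' - (v k - v j) = (u - v k + y) - (u - v j + y') := by abel
        rw [h4, sub_self] at h6
        have h3 : y - y' = v k - v j := sub_eq_zero.mp h6
        rw [h3]
        exact Submodule.sub_mem _ (hvmem k) (hvmem j)
      have heq := huniq _ _ (hGD k hy) (hGD j hy') hyy
      exact hGdisj k j hkj y hy (heq ▸ hy')
    rw [hPdef]
    simp only
    rw [measure_iUnion hdisj (fun k => (hGmeas k).const_vadd _)]
    rw [hvolG]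
    congr 1
    funext k
    exact measure_vadd _ _ _
  -- disjoint union over S
  have hd : (↑S : Set (EuclideanSpace ℝ (Fin n))).PairwiseDisjoint P := by
    intro u hu u' hu' huu
    exact hPdisj u u' (hS u hu).1 (hS u' hu').1 huu
  have hsum : volume (⋃ u ∈ S, P u) = ∑ u ∈ S, volume (P u) :=
    measure_biUnion_finset hd (fun u _ => hPmeas u)
  have hsubset : (⋃ u ∈ S, P u) ⊆ T - T + T := by
    intro x hx
    obtain ⟨u, hu, hxu⟩ := Set.mem_iUnion₂.1 hx
    obtain ⟨k, hk⟩ := (hPmem u x).1 hxu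
    have hgT : (x - u + v k) - v k ∈ T := hGQ k hk
    rw [Set.mem_add]
    refine ⟨u, (hS u hu).2, (x - u + v k) - v k, hgT, by abel⟩
  calc (S.card : ℝ≥0∞) * volume D = ∑ _u ∈ S, volume D := by
        rw [Finset.sum_const, nsmul_eq_mul]
    _ = ∑ u ∈ S, volume (P u) := by
        exact Finset.sum_congr rfl fun u _ => (hvolP u).symm
    _ = volume (⋃ u ∈ S, P u) := hsum.symm
    _ ≤ volume (T - T + T) := measure_mono hsubset

/-- If a lattice covering of `ℝ^n` by an `n`-dimensional simplex `T` has star number at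
least `2^{3n+1}`, then its density is at least `2`, i.e. `vol(T) ≥ 2·det(Λ)`. -/
theorem simplex_covering_large_star_number (n : ℕ) (hn : 1 ≤ n)
    (p : Fin (n + 1) → EuclideanSpace ℝ (Fin n)) (hp : AffineIndependent ℝ p)
    (T : Set (EuclideanSpace ℝ (Fin n))) (hT : T = convexHull ℝ (Set.range p))
    (b : Module.Basis (Fin n) ℝ (EuclideanSpace ℝ (Fin n)))
    (hcov : T + (↑(Submodule.span ℤ (Set.range b)) : Set (EuclideanSpace ℝ (Fin n)))
      = Set.univ)
    (hstar : 2 ^ (3 * n + 1) ≤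
      {u : EuclideanSpace ℝ (Fin n) | u ∈ Submodule.span ℤ (Set.range b) ∧ u ≠ 0 ∧
        (T ∩ (T + {u})).Nonempty}.ncard) :
    ENNReal.ofReal (2 * |(Matrix.of fun i j => b i j).det|) ≤ volume T := by
  classical
  set Sset := {u : EuclideanSpace ℝ (Fin n) | u ∈ Submodule.span ℤ (Set.range b) ∧ u ≠ 0 ∧
    (T ∩ (T + {u})).Nonempty} with hSset
  have hfin : Sset.Finite := by
    by_contra h
    rw [Set.Infinite.ncard h] at hstar
    have : 0 < 2 ^ (3 * n + 1) := Nat.pow_pos (by norm_num)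
    omega
  set S := hfin.toFinset with hSdef
  have hcard : 2 ^ (3 * n + 1) ≤ S.card := by
    rwa [Set.ncard_eq_toFinset_card Sset hfin] at hstar
  have hTm : MeasurableSet T := by
    rw [hT]
    exact ((Set.finite_range p).isCompact_convexHull ℝ).isClosed.measurableSet
  have hS : ∀ u ∈ S, u ∈ Submodule.span ℤ (Set.range b) ∧ u ∈ T - T := by
    intro u hu
    rw [hSdef, Set.Finite.mem_toFinset] at hu
    refine ⟨hu.1, ?_⟩
    obtain ⟨x, hxT, hxTu⟩ := hu.2.2
    rw [Set.mem_add] at hxTu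
    obtain ⟨t, ht, w, hw, hwx⟩ := hxTu
    rw [Set.mem_singleton_iff] at hw
    subst hw
    rw [Set.mem_sub]
    exact ⟨x, hxT, t, ht, by rw [← hwx]; abel⟩
  have hpack := packing_bound b T hTm hcov S hS
  have hvol6 := volume_sub_add_le p T hT
  set d := volume (ZSpan.fundamentalDomain b) with hd
  have h1 : (2 : ℝ≥0∞) ^ (3 * n + 1) * d ≤ 6 ^ n * volume T := by
    refine le_trans (le_trans ?_ hpack) hvol6
    refine mul_le_mul_left ?_ d
    exact_mod_cast hcard
  have h2 : (6 : ℝ≥0∞) ^ n * (2 * d) ≤ (2 : ℝ≥0∞) ^ (3 * n + 1) * d := by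
    have h8 : (2 : ℝ≥0∞) ^ (3 * n + 1) = 2 * 8 ^ n := by
      rw [pow_succ, pow_mul]
      norm_num
      ring
    rw [h8]
    have h68 : (6 : ℝ≥0∞) ^ n ≤ 8 ^ n := pow_le_pow_left₀ (by norm_num) (by norm_num) n
    calc (6 : ℝ≥0∞) ^ n * (2 * d) = 2 * (6 ^ n * d) := by ring
      _ ≤ 2 * (8 ^ n * d) := by
          exact mul_le_mul_right (mul_le_mul_left h68 d) 2
      _ = 2 * 8 ^ n * d := by ring
  have h3 : (6 : ℝ≥0∞) ^ n * (2 * d) ≤ 6 ^ n * volume T := le_trans h2 h1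
  have h4 : 2 * d ≤ volume T := by
    refine (ENNReal.mul_le_mul_iff_right ?_ ?_).mp h3
    · exact pow_ne_zero n (by norm_num)
    · exact ENNReal.pow_ne_top (by norm_num)
  have h5 : ENNReal.ofReal (2 * |(Matrix.of fun i j => b i j).det|) = 2 * d := by
    rw [hd, volume_fd b, ENNReal.ofReal_mul (by norm_num : (0:ℝ) ≤ 2)]
    norm_num
  rw [h5]
  exact h4
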